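/- Let n, c, r, t, k be natural numbers with k + c ≤ r, k + c ≤ t, and r + t − k ≤ n − c, and let D : {0,1,...,n} → {−1,1} be a predicate. Define G : {0,1,...,c} → {−1,1} by G(i) = D(r + t − 2(k+i)) (note r + t − 2(k+i) ∈ {0,...,n} by the hypotheses). Then the sign-rank of the 2^n × 2^n matrix F(x,y) = D(|x ⊕ y|) (indexed by x, y ∈ {0,1}^n) is at least the sign-rank of the 2^c × 2^c matrix F'(x',y') = G(|x' ∧ y'|) (indexed by x', y' ∈ {0,1}^c). -/

import Mathlib

/-- Hamming weight of a Boolean vector. -/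
def hamW {n : ℕ} (x : Fin n → Bool) : ℕ := (Finset.univ.filter (fun i => x i)).card

/-- Bitwise XOR of Boolean vectors. -/
def bxor {n : ℕ} (x y : Fin n → Bool) : Fin n → Bool := fun i => xor (x i) (y i)

/-- Bitwise AND of Boolean vectors. -/
def band {n : ℕ} (x y : Fin n → Bool) : Fin n → Bool := fun i => x i && y i

/-- Sign-rank of a real sign matrix `F`: the least rank of a real matrix `A`
of the same dimensions all of whose entries are nonzero and have the same sign
as the corresponding entry of `F`. -/
noncomputable def signRank {X Y : Type} [Fintype X] [Fintype Y]
    (F : Matrix X Y ℝ) : ℕ :=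
  sInf {r : ℕ | ∃ A : Matrix X Y ℝ, (∀ x y, 0 < A x y * F x y) ∧ A.rank = r}

open Finset

/-- Rank does not increase under taking arbitrary submatrices. -/
lemma my_rank_submatrix_le {X Y X' Y' : Type} [Fintype X] [Fintype Y] [Fintype X'] [Fintype Y']
    [DecidableEq X] [DecidableEq Y]
    (A : Matrix X Y ℝ) (f : X' → X) (g : Y' → Y) :
    (A.submatrix f g).rank ≤ A.rank := by
  have h1 : (Matrix.of fun i j => if f i = j then (1:ℝ) else 0) * A = A.submatrix f id := by
    ext i j
    simp [Matrix.mul_apply, ite_mul]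
  have h2 : A.submatrix f id * (Matrix.of fun j i => if g i = j then (1:ℝ) else 0)
      = A.submatrix f g := by
    ext i j
    simp [Matrix.mul_apply, mul_ite]
  calc (A.submatrix f g).rank
      = ((Matrix.of fun i j => if f i = j then (1:ℝ) else 0) * A *
          (Matrix.of fun j i => if g i = j then (1:ℝ) else 0)).rank := by rw [h1, h2]
    _ ≤ ((Matrix.of fun i j => if f i = j then (1:ℝ) else 0) * A).rank :=
        Matrix.rank_mul_le_left _ _
    _ ≤ A.rank := Matrix.rank_mul_le_right _ _

/-- Sign-rank does not increase under taking arbitrary submatrices. -/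
lemma signRank_submatrix_le {X Y X' Y' : Type} [Fintype X] [Fintype Y] [Fintype X'] [Fintype Y']
    [DecidableEq X] [DecidableEq Y]
    (F : Matrix X Y ℝ) (hF : ∀ x y, F x y ≠ 0) (f : X' → X) (g : Y' → Y) :
    signRank (F.submatrix f g) ≤ signRank F := by
  have hne : {ρ : ℕ | ∃ A : Matrix X Y ℝ, (∀ x y, 0 < A x y * F x y) ∧ A.rank = ρ}.Nonempty :=
    ⟨F.rank, F, fun x y => mul_self_pos.2 (hF x y), rfl⟩
  obtain ⟨A, hA, hrk⟩ := Nat.sInf_mem hne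
  have h1 : signRank (F.submatrix f g) ≤ (A.submatrix f g).rank :=
    Nat.sInf_le ⟨A.submatrix f g, fun x y => hA (f x) (g y), rfl⟩
  calc signRank (F.submatrix f g) ≤ (A.submatrix f g).rank := h1
    _ ≤ A.rank := my_rank_submatrix_le A f g
    _ = signRank F := hrk

/-- First embedding: `x'` on the first `c` coordinates, complement of `x'` then ones on the
next `r - k` coordinates, zero elsewhere. -/
def emba (c r k : ℕ) (x : Fin c → Bool) : ℕ → Bool := fun i =>
  if h : i < c then x ⟨i, h⟩
  else if i < c + (r - k) then (if h2 : i - c < c then !x ⟨i - c, h2⟩ else true)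
  else false

/-- Second embedding: `y'` on the first `c` coordinates, zero on the next `r - k`,
complement of `y'` then ones on the next `t - k` coordinates, zero elsewhere. -/
def embb (c r t k : ℕ) (y : Fin c → Bool) : ℕ → Bool := fun i =>
  if h : i < c then y ⟨i, h⟩
  else if i < c + (r - k) then false
  else if i < c + (r - k) + (t - k) then
    (if h2 : i - (c + (r - k)) < c then !y ⟨i - (c + (r - k)), h2⟩ else true)
  else false

lemma hamW_eq_sum {m : ℕ} (z : Fin m → Bool) :
    hamW z = ∑ i : Fin m, (if z i then 1 else 0) := by
  unfold hamW
  rw [Finset.card_filter]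

lemma hamW_comp (m : ℕ) (gg : ℕ → Bool) :
    hamW (fun i : Fin m => gg ↑i) = ∑ i ∈ range m, (if gg i then 1 else 0) := by
  rw [hamW_eq_sum]
  exact Fin.sum_univ_eq_sum_range (fun i => if gg i then 1 else 0) m

lemma hamW_eq_wt {c : ℕ} (x : Fin c → Bool) :
    hamW x = ∑ i ∈ range c, (if h : i < c then (if x ⟨i, h⟩ then 1 else 0) else 0) := by
  rw [hamW_eq_sum, ← Fin.sum_univ_eq_sum_range]
  apply Finset.sum_congr rfl
  intro i _
  simp [i.isLt]

lemma key1 : ∀ a b : Bool,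
    ((if (xor a b) = true then (1:ℕ) else 0) + 2 * (if (a && b) = true then 1 else 0))
      = (if a = true then 1 else 0) + (if b = true then 1 else 0) := by decide

lemma key2 : ∀ a : Bool,
    ((if a = true then (0:ℕ) else 1) + (if a = true then 1 else 0)) = 1 := by decide

/-- The key weight identity for the embeddings. -/
lemma weight_emb (n c r t k : ℕ) (h1 : k + c ≤ r) (h2 : k + c ≤ t) (h3 : r + t - k ≤ n - c)
    (x y : Fin c → Bool) :
    hamW (bxor (fun i : Fin n => emba c r k x ↑i) (fun i : Fin n => embb c r t k y ↑i))
      = r + t - 2 * (k + hamW (band x y)) := by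
  have hkr : k ≤ r := by omega
  have hkt : k ≤ t := by omega
  have hcr : c ≤ r - k := by omega
  have hct : c ≤ t - k := by omega
  have hn : c + (r - k) + (t - k) ≤ n := by omega
  set gg : ℕ → Bool := fun i => xor (emba c r k x i) (embb c r t k y i) with hgg
  have hham : hamW (bxor (fun i : Fin n => emba c r k x ↑i) (fun i : Fin n => embb c r t k y ↑i))
      = ∑ i ∈ range n, (if gg i then 1 else 0) := hamW_comp n gg
  -- split the sum into four chunks
  have split1 : ∑ i ∈ Finset.Ico 0 c, (if gg i then 1 else 0)
      + ∑ i ∈ Finset.Ico c (c + (r - k)), (if gg i then 1 else 0)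
      + ∑ i ∈ Finset.Ico (c + (r - k)) (c + (r - k) + (t - k)), (if gg i then 1 else 0)
      + ∑ i ∈ Finset.Ico (c + (r - k) + (t - k)) n, (if gg i then 1 else 0)
      = ∑ i ∈ range n, (if gg i then 1 else 0) := by
    rw [Finset.sum_Ico_consecutive _ (by omega) (by omega : c ≤ c + (r-k)),
        Finset.sum_Ico_consecutive _ (by omega) (by omega : c + (r-k) ≤ c + (r-k) + (t-k)),
        Finset.sum_Ico_consecutive _ (by omega) (by omega : c + (r-k) + (t-k) ≤ n)]
    rw [Finset.range_eq_Ico]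
  set px := hamW x with hpx
  set py := hamW y with hpy
  set w := hamW (band x y) with hw
  -- chunk 1
  have hS1 : (∑ i ∈ Finset.Ico 0 c, (if gg i then 1 else 0)) + 2 * w = px + py := by
    rw [hpx, hpy, hw, hamW_eq_wt, hamW_eq_wt, hamW_eq_wt, ← Finset.range_eq_Ico,
        Finset.mul_sum, ← Finset.sum_add_distrib, ← Finset.sum_add_distrib]
    apply Finset.sum_congr rfl
    intro i hi
    have hic : i < c := Finset.mem_range.mp hi
    simp only [hgg, emba, embb, band, dif_pos hic]
    exact key1 (x ⟨i, hic⟩) (y ⟨i, hic⟩)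
  -- chunk 2
  have hS2 : (∑ i ∈ Finset.Ico c (c + (r - k)), (if gg i then 1 else 0)) + px = r - k := by
    rw [Finset.sum_Ico_eq_sum_range]
    have heq : ∀ i ∈ range (c + (r - k) - c), (if gg (c + i) then 1 else 0)
        = (if h : i < c then (if x ⟨i, h⟩ then 0 else 1) else 1) := by
      intro i hi
      have hilt : i < r - k := by
        have := Finset.mem_range.mp hi; omega
      have h1 : ¬ (c + i < c) := by omega
      have h2 : c + i < c + (r - k) := by omega
      have h3 : c + i - c = i := by omega
      simp only [hgg, emba, embb, dif_neg h1, if_pos h2, h3]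
      by_cases hic : i < c
      · simp only [dif_pos hic]
        cases x ⟨i, hic⟩ <;> simp
      · simp [hic]
    rw [Finset.sum_congr rfl heq]
    have hlen : c + (r - k) - c = r - k := by omega
    rw [hlen]
    have hsplit : ∑ i ∈ range (r - k), (if h : i < c then (if x ⟨i, h⟩ then 0 else 1) else 1)
        = (∑ i ∈ Finset.Ico 0 c, (if h : i < c then (if x ⟨i, h⟩ then 0 else 1) else 1))
          + ∑ i ∈ Finset.Ico c (r - k), (if h : i < c then (if x ⟨i, h⟩ then 0 else 1) else 1) := by
      rw [Finset.sum_Ico_consecutive _ (by omega) hcr, Finset.range_eq_Ico]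
    rw [hsplit]
    have hA : ∑ i ∈ Finset.Ico c (r - k), (if h : i < c then (if x ⟨i, h⟩ then 0 else 1) else 1)
        = (r - k) - c := by
      calc ∑ i ∈ Finset.Ico c (r - k), (if h : i < c then (if x ⟨i, h⟩ then 0 else 1) else 1)
          = ∑ _i ∈ Finset.Ico c (r - k), 1 := by
            apply Finset.sum_congr rfl
            intro i hi
            have : ¬ i < c := by have := (Finset.mem_Ico.mp hi).1; omega
            simp [this]
        _ = (r - k) - c := by simp
    have hB : (∑ i ∈ Finset.Ico 0 c, (if h : i < c then (if x ⟨i, h⟩ then 0 else 1) else 1))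
        + px = c := by
      rw [hpx, hamW_eq_wt, ← Finset.range_eq_Ico, ← Finset.sum_add_distrib]
      calc ∑ i ∈ range c, ((if h : i < c then (if x ⟨i, h⟩ then 0 else 1) else 1)
              + (if h : i < c then (if x ⟨i, h⟩ then 1 else 0) else 0))
          = ∑ _i ∈ range c, 1 := by
            apply Finset.sum_congr rfl
            intro i hi
            have hic : i < c := Finset.mem_range.mp hi
            simp only [dif_pos hic]
            exact key2 (x ⟨i, hic⟩)
        _ = c := by simp
    omega
  -- chunk 3
  have hS3 : (∑ i ∈ Finset.Ico (c + (r - k)) (c + (r - k) + (t - k)), (if gg i then 1 else 0))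
      + py = t - k := by
    rw [Finset.sum_Ico_eq_sum_range]
    have heq : ∀ i ∈ range (c + (r - k) + (t - k) - (c + (r - k))),
        (if gg (c + (r - k) + i) then 1 else 0)
          = (if h : i < c then (if y ⟨i, h⟩ then 0 else 1) else 1) := by
      intro i hi
      have hilt : i < t - k := by
        have := Finset.mem_range.mp hi; omega
      have h1 : ¬ (c + (r - k) + i < c) := by omega
      have h2 : ¬ (c + (r - k) + i < c + (r - k)) := by omega
      have h3 : c + (r - k) + i < c + (r - k) + (t - k) := by omega
      have h4 : c + (r - k) + i - (c + (r - k)) = i := by omega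
      simp only [hgg, emba, embb, dif_neg h1, if_neg h2, if_pos h3, h4]
      by_cases hic : i < c
      · simp only [dif_pos hic]
        cases y ⟨i, hic⟩ <;> simp
      · simp [hic]
    rw [Finset.sum_congr rfl heq]
    have hlen : c + (r - k) + (t - k) - (c + (r - k)) = t - k := by omega
    rw [hlen]
    have hsplit : ∑ i ∈ range (t - k), (if h : i < c then (if y ⟨i, h⟩ then 0 else 1) else 1)
        = (∑ i ∈ Finset.Ico 0 c, (if h : i < c then (if y ⟨i, h⟩ then 0 else 1) else 1))
          + ∑ i ∈ Finset.Ico c (t - k), (if h : i < c then (if y ⟨i, h⟩ then 0 else 1) else 1) := by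
      rw [Finset.sum_Ico_consecutive _ (by omega) hct, Finset.range_eq_Ico]
    rw [hsplit]
    have hA : ∑ i ∈ Finset.Ico c (t - k), (if h : i < c then (if y ⟨i, h⟩ then 0 else 1) else 1)
        = (t - k) - c := by
      calc ∑ i ∈ Finset.Ico c (t - k), (if h : i < c then (if y ⟨i, h⟩ then 0 else 1) else 1)
          = ∑ _i ∈ Finset.Ico c (t - k), 1 := by
            apply Finset.sum_congr rfl
            intro i hi
            have : ¬ i < c := by have := (Finset.mem_Ico.mp hi).1; omega
            simp [this]
        _ = (t - k) - c := by simp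
    have hB : (∑ i ∈ Finset.Ico 0 c, (if h : i < c then (if y ⟨i, h⟩ then 0 else 1) else 1))
        + py = c := by
      rw [hpy, hamW_eq_wt, ← Finset.range_eq_Ico, ← Finset.sum_add_distrib]
      calc ∑ i ∈ range c, ((if h : i < c then (if y ⟨i, h⟩ then 0 else 1) else 1)
              + (if h : i < c then (if y ⟨i, h⟩ then 1 else 0) else 0))
          = ∑ _i ∈ range c, 1 := by
            apply Finset.sum_congr rfl
            intro i hi
            have hic : i < c := Finset.mem_range.mp hi
            simp only [dif_pos hic]
            exact key2 (y ⟨i, hic⟩)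
        _ = c := by simp
    omega
  -- chunk 4
  have hS4 : (∑ i ∈ Finset.Ico (c + (r - k) + (t - k)) n, (if gg i then 1 else 0)) = 0 := by
    apply Finset.sum_eq_zero
    intro i hi
    have hige : c + (r - k) + (t - k) ≤ i := (Finset.mem_Ico.mp hi).1
    have h1 : ¬ (i < c) := by omega
    have h2 : ¬ (i < c + (r - k)) := by omega
    have h3 : ¬ (i < c + (r - k) + (t - k)) := by omega
    simp [hgg, emba, embb, h1, h2, h3]
  omega

lemma hamW_le {m : ℕ} (z : Fin m → Bool) : hamW z ≤ m := by
  classical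
  calc hamW z ≤ Finset.univ.card := Finset.card_filter_le _ _
    _ = m := by simp

/-- The reduction step: with `k + c ≤ r`, `k + c ≤ t`, `r + t − k ≤ n − c` and
`G(i) = D(r + t − 2(k + i))`, the sign-rank of the XOR matrix
`F(x,y) = D(|x ⊕ y|)` on `{0,1}^n` is at least the sign-rank of the AND matrix
`F'(x',y') = G(|x' ∧ y'|)` on `{0,1}^c`. -/
theorem signRank_and_le_signRank_xor (n c r t k : ℕ)
    (h1 : k + c ≤ r) (h2 : k + c ≤ t) (h3 : r + t - k ≤ n - c)
    (D : ℕ → ℤ) (hD : ∀ i ≤ n, D i = 1 ∨ D i = -1) :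
    signRank (fun x' y' : Fin c → Bool =>
        (D (r + t - 2 * (k + hamW (band x' y'))) : ℝ)) ≤
      signRank (fun x y : Fin n → Bool => (D (hamW (bxor x y)) : ℝ)) := by
  classical
  set F : Matrix (Fin n → Bool) (Fin n → Bool) ℝ :=
    fun x y => (D (hamW (bxor x y)) : ℝ) with hF
  have hFne : ∀ x y, F x y ≠ 0 := by
    intro x y
    rcases hD (hamW (bxor x y)) (hamW_le _) with h | h <;> simp [hF, h]
  set f : (Fin c → Bool) → (Fin n → Bool) := fun x' => fun i => emba c r k x' ↑i with hf
  set g : (Fin c → Bool) → (Fin n → Bool) := fun y' => fun i => embb c r t k y' ↑i with hg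
  have hsub : (fun x' y' : Fin c → Bool =>
      (D (r + t - 2 * (k + hamW (band x' y'))) : ℝ)) = F.submatrix f g := by
    funext x' y'
    have : hamW (bxor (f x') (g y')) = r + t - 2 * (k + hamW (band x' y')) :=
      weight_emb n c r t k h1 h2 h3 x' y'
    show (D (r + t - 2 * (k + hamW (band x' y'))) : ℝ) = (D (hamW (bxor (f x') (g y'))) : ℝ)
    rw [this]
  rw [hsub]
  exact signRank_submatrix_le F hFne f g
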